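/- arXiv:1901.01160 — 5 statements merged into one kernel-verified Lean document; each statement's English description precedes it below -/
import Mathlib

section
/- Let I be an ideal on a set Z of subsets of X and let 𝒜 be a family of I-positive subsets of Z whose pairwise intersections lie in I (an antichain of representatives). If either (a) I is κ-complete and |𝒜| ≤ κ, or (b) I is normal and fine and |𝒜| ≤ |X|, then there is a family ⟨B_A : A ∈ 𝒜⟩ of pairwise disjoint subsets of Z such that the symmetric difference A Δ B_A is in I for every A ∈ 𝒜. -/
open Cardinal Set

universe u

/-- `I` is a (nonprincipal, proper) ideal on the set `Z` of subsets of `X`. -/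
def IsSetIdeal {X : Type u} (Z : Set (Set X)) (I : Set (Set (Set X))) : Prop :=
  (∀ A ∈ I, A ⊆ Z) ∧
  (∀ A ∈ I, ∀ B : Set (Set X), B ⊆ A → B ∈ I) ∧
  (∀ A ∈ I, ∀ B ∈ I, A ∪ B ∈ I) ∧
  (∀ z ∈ Z, ({z} : Set (Set X)) ∈ I) ∧
  Z ∉ I

/-- `I` is fine. -/
def IsFineSetIdeal {X : Type u} (Z : Set (Set X)) (I : Set (Set (Set X))) : Prop :=
  ∀ x : X, {z | z ∈ Z ∧ x ∉ z} ∈ I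

/-- `I` is normal. -/
def IsNormalSetIdeal {X : Type u} (Z : Set (Set X)) (I : Set (Set (Set X))) : Prop :=
  ∀ A : X → Set (Set X), (∀ x, A x ∈ I) →
    {z | z ∈ Z ∧ ∃ x, x ∈ z ∧ z ∈ A x} ∈ I

/-- `I` is `κ`-complete: closed under unions of fewer than `κ` of its members. -/
def IsCompleteSetIdeal {X : Type u} (κ : Cardinal.{u}) (I : Set (Set (Set X))) : Prop :=
  ∀ 𝒜 : Set (Set (Set X)), #𝒜 < κ → 𝒜 ⊆ I → ⋃₀ 𝒜 ∈ I

/-- If `𝒜` is an antichain of `I`-positive subsets of `Z` (pairwise intersections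
in `I`), and either (a) `I` is `κ`-complete and `|𝒜| ≤ κ`, or (b) `I` is normal and
fine and `|𝒜| ≤ |X|`, then `𝒜` has a system of pairwise disjoint representatives:
a family `⟨B_A : A ∈ 𝒜⟩` of pairwise disjoint subsets of `Z` with each symmetric
difference `A Δ B_A` in `I`. -/
theorem antichain_disjoint_representatives {X : Type u} (κ : Cardinal.{u})
    (Z : Set (Set X)) (I : Set (Set (Set X))) (hideal : IsSetIdeal Z I)
    (𝒜 : Set (Set (Set X)))
    (hpos : ∀ A ∈ 𝒜, A ⊆ Z ∧ A ∉ I)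
    (hanti : ∀ A ∈ 𝒜, ∀ B ∈ 𝒜, A ≠ B → A ∩ B ∈ I)
    (hcase : (IsCompleteSetIdeal κ I ∧ #𝒜 ≤ κ) ∨
      (IsNormalSetIdeal Z I ∧ IsFineSetIdeal Z I ∧ #𝒜 ≤ #X)) :
    ∃ B : Set (Set X) → Set (Set X),
      (∀ A ∈ 𝒜, B A ⊆ Z) ∧
      (∀ A ∈ 𝒜, (A \ B A) ∪ (B A \ A) ∈ I) ∧
      (∀ A ∈ 𝒜, ∀ A' ∈ 𝒜, A ≠ A' → B A ∩ B A' = ∅) := by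
  classical
  rcases Set.eq_empty_or_nonempty 𝒜 with h𝒜 | ⟨A₀, hA₀⟩
  · exact ⟨fun _ => ∅, by simp [h𝒜], by simp [h𝒜], by simp [h𝒜]⟩
  obtain ⟨hsub, hdown, hunion, hsing, hproper⟩ := hideal
  rcases hcase with ⟨hcomp, hcard⟩ | ⟨hnorm, hfine, hcard'⟩
  · -- case (a): κ-complete
    have hempty : ∅ ∈ I := by
      have h0 : (0 : Cardinal) < κ := by
        have hne : #↥𝒜 ≠ 0 := Cardinal.mk_ne_zero_iff.mpr ⟨⟨A₀, hA₀⟩⟩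
        exact lt_of_lt_of_le (pos_iff_ne_zero.mpr hne) hcard
      have := hcomp ∅ (by simpa using h0) (empty_subset I)
      simpa using this
    -- enumerate 𝒜 in order type (#𝒜).ord
    obtain ⟨e⟩ : Nonempty (↥𝒜 ≃ (#↥𝒜).ord.ToType) := by
      rw [← Cardinal.eq, Cardinal.mk_toType, Cardinal.card_ord]
    set ρ : Set (Set X) → (#↥𝒜).ord.ToType :=
      fun A => if h : A ∈ 𝒜 then e ⟨A, h⟩ else e ⟨A₀, hA₀⟩ with hρ
    have hρ_eq : ∀ A (h : A ∈ 𝒜), ρ A = e ⟨A, h⟩ := fun A h => dif_pos h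
    have hρ_inj : ∀ A ∈ 𝒜, ∀ A' ∈ 𝒜, ρ A = ρ A' → A = A' := by
      intro A hA A' hA' h
      rw [hρ_eq A hA, hρ_eq A' hA'] at h
      have := e.injective h
      exact congrArg Subtype.val this
    refine ⟨fun A => {z | z ∈ A ∧ ∀ A' ∈ 𝒜, ρ A' < ρ A → z ∉ A'}, ?_, ?_, ?_⟩
    · intro A hA z hz
      exact (hpos A hA).1 hz.1
    · intro A hA
      set F : Set (Set (Set X)) := (fun A' => A ∩ A') '' {A' ∈ 𝒜 | ρ A' < ρ A} with hF
      have hFI : ⋃₀ F ∈ I := by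
        apply hcomp
        · refine lt_of_le_of_lt (Cardinal.mk_image_le) ?_
          refine lt_of_le_of_lt ?_ (lt_of_lt_of_le (Cardinal.mk_Iio_ord_toType (ρ A)) hcard)
          refine Cardinal.mk_le_of_injective (f := fun p => (⟨ρ p.1, p.2.2⟩ : Iio (ρ A))) ?_
          rintro ⟨B₁, hB₁, _⟩ ⟨B₂, hB₂, _⟩ h
          simp only [Subtype.mk.injEq] at h ⊢
          exact hρ_inj B₁ hB₁ B₂ hB₂ (congrArg Subtype.val h)
        · rintro S ⟨A', ⟨hA', hlt⟩, rfl⟩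
          refine hanti A hA A' hA' ?_
          rintro rfl
          exact absurd rfl (ne_of_lt hlt)
      refine hdown _ hFI _ ?_
      rintro z (⟨hzA, hz⟩ | ⟨⟨hzA, _⟩, hznA⟩)
      · simp only [mem_setOf_eq, not_and, not_forall] at hz
        obtain ⟨A', hA', hlt, hz'⟩ := hz hzA
        · exact ⟨A ∩ A', ⟨A', ⟨hA', hlt⟩, rfl⟩, hzA, not_not.mp hz'⟩
      · exact (hznA hzA).elim
    · intro A hA A' hA' hne
      rcases lt_trichotomy (ρ A) (ρ A') with h | h | h
      · ext z
        simp only [mem_inter_iff, mem_setOf_eq, mem_empty_iff_false, iff_false]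
        rintro ⟨⟨hz1, _⟩, ⟨_, h2⟩⟩
        exact h2 A hA h hz1
      · exact absurd (hρ_inj A hA A' hA' h) hne
      · ext z
        simp only [mem_inter_iff, mem_setOf_eq, mem_empty_iff_false, iff_false]
        rintro ⟨⟨_, h1⟩, ⟨hz2, _⟩⟩
        exact h1 A' hA' h hz2
  · -- case (b): normal and fine
    obtain ⟨f⟩ : Nonempty (↥𝒜 ↪ X) := (Cardinal.le_def _ _).mp hcard'
    set g : Set (Set X) → X := fun A => if h : A ∈ 𝒜 then f ⟨A, h⟩ else f ⟨A₀, hA₀⟩ with hg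
    have hg_inj : ∀ A ∈ 𝒜, ∀ A' ∈ 𝒜, g A = g A' → A = A' := by
      intro A hA A' hA' h
      rw [hg] at h
      simp only [dif_pos hA, dif_pos hA'] at h
      exact congrArg Subtype.val (f.injective h)
    have hempty : ∅ ∈ I := hdown _ (hfine (g A₀)) _ (empty_subset _)
    refine ⟨fun A => {z | z ∈ A ∧ g A ∈ z ∧ ∀ A' ∈ 𝒜, A' ≠ A → g A' ∈ z → z ∉ A'},
      ?_, ?_, ?_⟩
    · intro A hA z hz
      exact (hpos A hA).1 hz.1
    · intro A hA
      set C : X → Set (Set X) :=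
        fun x => {z | z ∈ A ∧ ∃ A', ∃ _ : A' ∈ 𝒜, A' ≠ A ∧ g A' = x ∧ z ∈ A'} with hC
      have hCI : ∀ x, C x ∈ I := by
        intro x
        by_cases hx : ∃ A', A' ∈ 𝒜 ∧ A' ≠ A ∧ g A' = x
        · obtain ⟨A₁, hA₁, hne₁, hgx₁⟩ := hx
          refine hdown _ (hanti A hA A₁ hA₁ (Ne.symm hne₁)) _ ?_
          rintro z ⟨hzA, A', hA', hne', hgx', hzA'⟩
          have : A' = A₁ := hg_inj A' hA' A₁ hA₁ (hgx'.trans hgx₁.symm)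
          exact ⟨hzA, this ▸ hzA'⟩
        · have : C x = ∅ := by
            ext z
            simp only [hC, mem_setOf_eq, mem_empty_iff_false, iff_false]
            rintro ⟨_, A', hA', hne', hgx', _⟩
            exact hx ⟨A', hA', hne', hgx'⟩
          rw [this]; exact hempty
      have hD : {z | z ∈ Z ∧ ∃ x, x ∈ z ∧ z ∈ C x} ∈ I := hnorm C hCI
      have hE : {z | z ∈ Z ∧ g A ∉ z} ∈ I := hfine (g A)
      refine hdown _ (hunion _ hE _ hD) _ ?_
      rintro z (⟨hzA, hz⟩ | ⟨⟨hzA, _, _⟩, hznA⟩)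
      · have hzZ : z ∈ Z := (hpos A hA).1 hzA
        simp only [mem_setOf_eq, not_and, not_forall] at hz
        by_cases hgz : g A ∈ z
        · obtain ⟨A', hA', hne', hgz', hz'⟩ := hz hzA hgz
          exact Or.inr ⟨hzZ, g A', hgz', hzA, A', hA', hne', rfl, not_not.mp hz'⟩
        · exact Or.inl ⟨hzZ, hgz⟩
      · exact (hznA hzA).elim
    · intro A hA A' hA' hne
      ext z
      simp only [mem_inter_iff, mem_setOf_eq, mem_empty_iff_false, iff_false]
      rintro ⟨⟨hz1, hg1, hrest1⟩, ⟨hz2, hg2, _⟩⟩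
      exact hrest1 A' hA' (Ne.symm hne) hg2 hz2
end

section
/- Let P be a partial order and μ a cardinal such that every strictly descending chain in P of length less than μ has an infimum (a greatest lower bound). Then every downward-directed subset of P of cardinality less than μ has an infimum. -/
open Cardinal Set

universe u

section Aux

variable {P : Type u} [PartialOrder P]

/-- One step of the directed closure under a binary lower-bound choice function. -/
private def dstep (g : P → P → P) (T : Set P) : Set P := T ∪ Set.image2 g T T

private lemma dstep_mono (g : P → P → P) : Monotone (dstep g) := fun _ _ h =>
  Set.union_subset_union h (Set.image2_subset h h)

private lemma subset_dstep (g : P → P → P) (T : Set P) : T ⊆ dstep g T :=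
  Set.subset_union_left

/-- Directed closure of a set under a binary lower-bound choice function. -/
private def dcl (g : P → P → P) (S : Set P) : Set P := ⋃ n : ℕ, (dstep g)^[n] S

private lemma iterate_dstep_mono_n (g : P → P → P) (S : Set P) {n m : ℕ} (h : n ≤ m) :
    (dstep g)^[n] S ⊆ (dstep g)^[m] S := by
  induction m with
  | zero => simpa [Nat.le_zero.mp h]
  | succ m ih =>
    rcases Nat.lt_or_ge n (m+1) with h' | h'
    · refine (ih (Nat.lt_succ_iff.mp h')).trans ?_
      rw [Function.iterate_succ_apply']
      exact subset_dstep _ _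
    · have : n = m + 1 := le_antisymm h h'
      subst this; rfl

private lemma subset_dcl (g : P → P → P) (S : Set P) : S ⊆ dcl g S :=
  Set.subset_iUnion (fun n => (dstep g)^[n] S) 0

private lemma dcl_mono (g : P → P → P) : Monotone (dcl g) := fun _ _ h =>
  Set.iUnion_mono fun n => (dstep_mono g).iterate n h

private lemma dcl_subset {D : Set P} {g : P → P → P}
    (hg : ∀ x ∈ D, ∀ y ∈ D, g x y ∈ D) {S : Set P} (hS : S ⊆ D) : dcl g S ⊆ D := by
  refine Set.iUnion_subset fun n => ?_
  induction n with
  | zero => simpa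
  | succ n ih =>
    rw [Function.iterate_succ_apply']
    rintro x (hx | hx)
    · exact ih hx
    · obtain ⟨a, ha, b, hb, rfl⟩ := hx
      exact hg a (ih ha) b (ih hb)

private lemma dcl_directedOn {D : Set P} {g : P → P → P}
    (hg : ∀ x ∈ D, ∀ y ∈ D, g x y ∈ D ∧ g x y ≤ x ∧ g x y ≤ y)
    {S : Set P} (hS : S ⊆ D) : DirectedOn (· ≥ ·) (dcl g S) := by
  have hsub : dcl g S ⊆ D := dcl_subset (fun x hx y hy => (hg x hx y hy).1) hS
  intro x hx y hy
  obtain ⟨_, ⟨n, rfl⟩, hxn⟩ := hx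
  obtain ⟨_, ⟨m, rfl⟩, hym⟩ := hy
  have hx' : x ∈ (dstep g)^[max n m] S := iterate_dstep_mono_n g S (le_max_left n m) hxn
  have hy' : y ∈ (dstep g)^[max n m] S := iterate_dstep_mono_n g S (le_max_right n m) hym
  have hmem : g x y ∈ (dstep g)^[max n m + 1] S := by
    rw [Function.iterate_succ_apply']
    exact Or.inr (Set.mem_image2_of_mem hx' hy')
  have hxd : x ∈ D := hsub (Set.mem_iUnion.mpr ⟨n, hxn⟩)
  have hyd : y ∈ D := hsub (Set.mem_iUnion.mpr ⟨m, hym⟩)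
  exact ⟨g x y, Set.mem_iUnion.mpr ⟨max n m + 1, hmem⟩,
    (hg x hxd y hyd).2.1, (hg x hxd y hyd).2.2⟩

private lemma mk_dcl_le (g : P → P → P) (S : Set P) :
    #(dcl g S) ≤ max #S ℵ₀ := by
  set M := max (#S) ℵ₀ with hM
  have hMinf : ℵ₀ ≤ M := le_max_right _ _
  have hstep : ∀ n : ℕ, #((dstep g)^[n] S) ≤ M := by
    intro n
    induction n with
    | zero =>
      rw [Function.iterate_zero_apply, hM]
      exact le_max_left _ _
    | succ n ih =>
      rw [Function.iterate_succ_apply']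
      refine (Cardinal.mk_union_le _ _).trans ?_
      have h2 : #(Set.image2 g ((dstep g)^[n] S) ((dstep g)^[n] S)) ≤ M := by
        refine Cardinal.mk_image2_le.trans ?_
        calc #((dstep g)^[n] S) * #((dstep g)^[n] S) ≤ M * M :=
              mul_le_mul' ih ih
          _ = M := Cardinal.mul_eq_self hMinf
      calc #((dstep g)^[n] S) + #(Set.image2 g ((dstep g)^[n] S) ((dstep g)^[n] S))
          ≤ M + M := add_le_add ih h2
        _ = M := Cardinal.add_eq_self hMinf
  show #(↥(⋃ n : ℕ, (dstep g)^[n] S)) ≤ M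
  have h := Cardinal.mk_iUnion_le_lift (fun n : ℕ => (dstep g)^[n] S)
  simp only [Cardinal.lift_uzero, Cardinal.mk_nat, Cardinal.lift_aleph0] at h
  refine le_trans h ?_
  calc ℵ₀ * ⨆ n, #((dstep g)^[n] S) ≤ M * M := mul_le_mul' hMinf (ciSup_le' hstep)
    _ = M := Cardinal.mul_eq_self hMinf

/-- Any antitone chain indexed by a well order, of size `< μ`, has an infimum,
given the hypothesis on strictly descending ordinal-indexed chains. -/
private lemma antitone_chain_isGLB {μ : Cardinal.{u}}
    (hchains : ∀ β : Ordinal.{u}, β.card < μ → ∀ f : β.ToType → P, StrictAnti f →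
      ∃ m, IsGLB (Set.range f) m)
    {ι : Type*} [LinearOrder ι] [WellFoundedLT ι] (c : ι → P) (hanti : Antitone c)
    (hcard : #(Set.range c) < μ) : ∃ m, IsGLB (Set.range c) m := by
  classical
  set M := Set.range c with hMdef
  let r : ↥M → ↥M → Prop := fun a b => (b : P) < (a : P)
  have hwfι : WellFounded ((· < ·) : ι → ι → Prop) := wellFounded_lt
  have hex : ∀ a : ↥M, ({i | c i = (a : P)} : Set ι).Nonempty := fun a => a.2
  let idx : ↥M → ι := fun a => hwfι.min {i | c i = (a : P)} (hex a)
  have hidx : ∀ a, c (idx a) = (a : P) := fun a => hwfι.min_mem _ (hex a)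
  have hsub : ∀ a b : ↥M, r a b → idx a < idx b := by
    intro a b hr
    by_contra h
    push_neg at h
    have : (a : P) ≤ (b : P) := by
      rw [← hidx a, ← hidx b]
      exact hanti h
    exact hr.not_ge this
  haveI : IsTrichotomous ↥M r := by
    constructor
    rintro ⟨_, ⟨i, rfl⟩⟩ ⟨_, ⟨j, rfl⟩⟩ h1 h2
    rcases le_total i j with h | h
    · rcases (hanti h).lt_or_eq with h' | h'
      · exact (h1 h').elim
      · exact Subtype.ext h'.symm
    · rcases (hanti h).lt_or_eq with h' | h'
      · exact (h2 h').elim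
      · exact Subtype.ext h'
  haveI : IsTrans ↥M r := ⟨fun _ _ _ h1 h2 => lt_trans h2 h1⟩
  haveI : IsWellFounded ↥M r :=
    ⟨Subrelation.wf (fun {a b} h => hsub a b h) (InvImage.wf idx hwfι)⟩
  haveI : IsWellOrder ↥M r := {}
  set β := Ordinal.type r with hβdef
  have hβ : β.card < μ := by rwa [hβdef, Ordinal.card_type]
  let q := (Ordinal.ToType.mk (o := β)).symm
  let f : β.ToType → P := fun x => ((Ordinal.enum r ⟨(q x).1, (q x).2⟩ : ↥M) : P)
  have hf : StrictAnti f := by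
    intro x y hxy
    have h1 : ((q x : Set.Iio β) : Ordinal) < ((q y : Set.Iio β) : Ordinal) := q.strictMono hxy
    exact (Ordinal.enum_lt_enum (r := r)).mpr h1
  have hrange : Set.range f = M := by
    ext p
    constructor
    · rintro ⟨x, rfl⟩
      exact (Ordinal.enum r ⟨(q x).1, (q x).2⟩).2
    · intro hp
      set o : {o // o < Ordinal.type r} := (Ordinal.enum r).symm ⟨p, hp⟩ with ho
      refine ⟨q.symm ⟨o.1, o.2⟩, ?_⟩
      show ((Ordinal.enum r ⟨(q (q.symm ⟨o.1, o.2⟩)).1, _⟩ : ↥M) : P) = p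
      have hq : q (q.symm ⟨o.1, o.2⟩) = ⟨o.1, o.2⟩ := q.apply_symm_apply _
      rw [hq]
      have : Ordinal.enum r ⟨o.1, o.2⟩ = ⟨p, hp⟩ := by
        rw [ho]
        exact (Ordinal.enum r).apply_symm_apply _
      rw [this]
  obtain ⟨m, hm⟩ := hchains β hβ f hf
  rw [hrange] at hm
  exact ⟨m, hm⟩

end Aux

/-- If every strictly descending chain in a partial order `P` of length less than the
cardinal `μ` has an infimum (greatest lower bound), then every downward-directed
subset of `P` of cardinality less than `μ` has an infimum. -/
theorem directed_has_infimum_of_chains_have_infimum {P : Type u} [PartialOrder P]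
    (μ : Cardinal.{u})
    (hchains : ∀ β : Ordinal.{u}, β.card < μ → ∀ f : β.ToType → P, StrictAnti f →
      ∃ m, IsGLB (Set.range f) m) :
    ∀ D : Set P, DirectedOn (· ≥ ·) D → #D < μ → ∃ m, IsGLB D m := by
  classical
  suffices key : ∀ κ : Cardinal.{u}, ∀ D : Set P, DirectedOn (· ≥ ·) D → #D < μ →
      Cardinal.mk D = κ → ∃ m, IsGLB D m by
    intro D h1 h2
    exact key (#D) D h1 h2 rfl
  intro κ
  induction κ using WellFoundedLT.induction with
  | _ κ ih =>
  intro D hdir hDμ hDκ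
  -- choice function for directedness
  have hgex : ∀ x y : P, ∃ z : P, (x ∈ D → y ∈ D → z ∈ D ∧ z ≤ x ∧ z ≤ y) := by
    intro x y
    by_cases h : x ∈ D ∧ y ∈ D
    · obtain ⟨z, hz, hzx, hzy⟩ := hdir x h.1 y h.2
      exact ⟨z, fun _ _ => ⟨hz, hzx, hzy⟩⟩
    · exact ⟨x, fun hx hy => absurd ⟨hx, hy⟩ h⟩
  choose g hg using hgex
  have hg' : ∀ x ∈ D, ∀ y ∈ D, g x y ∈ D ∧ g x y ≤ x ∧ g x y ≤ y :=
    fun x hx y hy => hg x y hx hy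
  rcases eq_or_ne D ∅ with rfl | hne
  · -- empty case
    have h0 : (0 : Ordinal.{u}).card < μ := by
      simpa using lt_of_le_of_lt (zero_le : 0 ≤ #(∅ : Set P)) hDμ
    obtain ⟨m, hm⟩ := hchains 0 h0 (fun x => (Ordinal.isEmpty_toType_zero.false x).elim)
      (fun x => (Ordinal.isEmpty_toType_zero.false x).elim)
    rw [Set.range_eq_empty] at hm
    exact ⟨m, hm⟩
  rcases lt_or_ge (#D) ℵ₀ with hfin | hinf
  · -- finite nonempty case: a directed finite set has a least element
    have hDfin : D.Finite := Cardinal.lt_aleph0_iff_set_finite.mp hfin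
    obtain ⟨a, ha, hmin⟩ := hDfin.exists_minimal
      (Set.nonempty_iff_ne_empty.mpr hne)
    have hleast : ∀ d ∈ D, a ≤ d := by
      intro d hd
      obtain ⟨z, hz, hza, hzd⟩ := hdir a ha d hd
      have : a = z := le_antisymm (hmin hz hza) hza
      rw [this]; exact hzd
    exact ⟨a, (IsLeast.isGLB ⟨ha, hleast⟩)⟩
  rcases eq_or_lt_of_le hinf with hcount | hbig
  · -- countably infinite case
    have hcnt : Countable ↥D := Cardinal.mk_le_aleph0_iff.mp (le_of_eq hcount.symm)
    have hinf' : Infinite ↥D := Cardinal.infinite_iff.mpr hinf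
    obtain ⟨dd⟩ := nonempty_denumerable ↥D
    let e : ↥D ≃ ℕ := @Denumerable.eqv ↥D dd
    let d : ℕ → ↥D := e.symm
    let c : ℕ → P := fun n => Nat.rec ((d 0 : P)) (fun n cn => g cn (d (n + 1))) n
    have hc0 : c 0 = (d 0 : P) := rfl
    have hcs : ∀ n, c (n + 1) = g (c n) (d (n + 1)) := fun n => rfl
    have hcD : ∀ n, c n ∈ D := by
      intro n
      induction n with
      | zero => exact (d 0).2
      | succ n ihn =>
        rw [hcs]
        exact (hg' _ ihn _ (d (n + 1)).2).1
    have hanti : Antitone c := by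
      refine antitone_nat_of_succ_le fun n => ?_
      rw [hcs]
      exact (hg' _ (hcD n) _ (d (n + 1)).2).2.1
    have hcd : ∀ n, c n ≤ (d n : P) := by
      intro n
      cases n with
      | zero => exact le_of_eq hc0
      | succ n =>
        rw [hcs]
        exact (hg' _ (hcD n) _ (d (n + 1)).2).2.2
    have hrlt : #(Set.range c) < μ := by
      refine lt_of_le_of_lt (Cardinal.mk_le_mk_of_subset ?_) hDμ
      rintro _ ⟨n, rfl⟩
      exact hcD n
    obtain ⟨m, hm⟩ := antitone_chain_isGLB hchains c hanti hrlt
    refine ⟨m, ⟨?_, ?_⟩⟩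
    · intro x hx
      obtain ⟨n, hn⟩ : ∃ n, (d n : P) = x := ⟨e ⟨x, hx⟩, by simp [d]⟩
      calc m ≤ c n := hm.1 (Set.mem_range_self n)
        _ ≤ (d n : P) := hcd n
        _ = x := hn
    · intro l hl
      refine hm.2 ?_
      rintro _ ⟨n, rfl⟩
      exact hl (hcD n)
  · -- uncountable case: Iwamura decomposition
    set κ' := #D with hκ'
    have hκord : (κ'.ord).card = κ' := Cardinal.card_ord κ'
    let ι := (κ'.ord).ToType
    have hι : #ι = κ' := (Cardinal.mk_toType _).trans hκord
    obtain ⟨e⟩ := Cardinal.eq.mp (hι.trans hκ')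
    let B : ι → Set P := fun i => (fun j => ((e j : ↥D) : P)) '' Set.Iic i
    let S : ι → Set P := fun i => dcl g (B i)
    have hBD : ∀ i, B i ⊆ D := by
      rintro i _ ⟨j, _, rfl⟩
      exact (e j).2
    have hSD : ∀ i, S i ⊆ D := fun i =>
      dcl_subset (fun x hx y hy => (hg' x hx y hy).1) (hBD i)
    have hSdir : ∀ i, DirectedOn (· ≥ ·) (S i) := fun i => dcl_directedOn hg' (hBD i)
    have hScard : ∀ i, #(S i) < κ' := by
      intro i
      have hIic : #(Set.Iic i) < κ' := by
        have h1 : #(Set.Iio i) < κ' := Cardinal.mk_Iio_ord_toType i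
        have h2 : (Set.Iic i : Set ι) = Set.Iio i ∪ {i} := (Set.Iio_union_right).symm
        rw [h2]
        refine lt_of_le_of_lt (Cardinal.mk_union_le _ _) ?_
        refine Cardinal.add_lt_of_lt (le_of_lt hbig) h1 ?_
        simpa using lt_of_lt_of_le Cardinal.one_lt_aleph0 (le_of_lt hbig)
      have hB : #(B i) < κ' := lt_of_le_of_lt (Cardinal.mk_image_le) hIic
      refine lt_of_le_of_lt (mk_dcl_le g (B i)) ?_
      exact max_lt hB hbig
    have hSm : ∀ i, ∃ m, IsGLB (S i) m := by
      intro i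
      exact ih (#(S i)) (hDκ ▸ hScard i) (S i) (hSdir i)
        (lt_trans (hScard i) hDμ) rfl
    choose c hc using hSm
    have hSmono : ∀ {i j : ι}, i ≤ j → S i ⊆ S j := by
      intro i j hij
      exact dcl_mono g (Set.image_mono (Set.Iic_subset_Iic.mpr hij))
    have hanti : Antitone c := by
      intro i j hij
      exact (hc i).2 fun x hx => (hc j).1 (hSmono hij hx)
    have hrlt : #(Set.range c) < μ := by
      refine lt_of_le_of_lt Cardinal.mk_range_le ?_
      rw [hι]
      exact hDμ
    obtain ⟨m, hm⟩ := antitone_chain_isGLB hchains c hanti hrlt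
    refine ⟨m, ⟨?_, ?_⟩⟩
    · intro x hx
      set i : ι := e.symm ⟨x, hx⟩ with hi
      have hxB : x ∈ B i := ⟨i, Set.mem_Iic.mpr le_rfl, by simp [hi]⟩
      have hxS : x ∈ S i := subset_dcl g (B i) hxB
      calc m ≤ c i := hm.1 (Set.mem_range_self i)
        _ ≤ x := (hc i).1 hxS
    · intro l hl
      refine hm.2 ?_
      rintro _ ⟨i, rfl⟩
      exact (hc i).2 fun x hx => hl (hSD i hx)
end

section
/- Let B be a complete Boolean algebra and κ an infinite cardinal with |B| ≤ 2^κ. Then there is a surjective Boolean algebra homomorphism h from the powerset algebra 𝒫(κ) onto B such that h(x) = ⊥ for every bounded subset x of κ; consequently, there is an ideal I on κ containing all bounded subsets of κ with 𝒫(κ)/I ≅ B. -/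
open Cardinal Set
open scoped symmDiff

universe u

noncomputable section

namespace PowersetOntoCBA


variable {α : Type u} {B : Type u} [CompleteBooleanAlgebra B]

/-- A partial Boolean homomorphism from `Set α` to `B`. -/
structure PH (α B : Type u) [CompleteBooleanAlgebra B] where
  dom : Set (Set α)
  f : Set α → B
  bot_mem : ∅ ∈ dom
  compl_mem : ∀ a ∈ dom, aᶜ ∈ dom
  sup_mem : ∀ a ∈ dom, ∀ b ∈ dom, a ∪ b ∈ dom
  map_bot : f ∅ = ⊥
  map_sup : ∀ a ∈ dom, ∀ b ∈ dom, f (a ∪ b) = f a ⊔ f b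
  map_compl : ∀ a ∈ dom, f aᶜ = (f a)ᶜ

namespace PH

def le (p q : PH α B) : Prop := p.dom ⊆ q.dom ∧ ∀ a ∈ p.dom, q.f a = p.f a

theorem le_refl (p : PH α B) : p.le p := ⟨subset_rfl, fun _ _ => rfl⟩

theorem le_trans {p q r : PH α B} (h1 : p.le q) (h2 : q.le r) : p.le r :=
  ⟨h1.1.trans h2.1, fun a ha => (h2.2 a (h1.1 ha)).trans (h1.2 a ha)⟩

theorem inf_mem (p : PH α B) {a b : Set α} (ha : a ∈ p.dom) (hb : b ∈ p.dom) :
    a ∩ b ∈ p.dom := by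
  have : a ∩ b = (aᶜ ∪ bᶜ)ᶜ := by simp
  rw [this]
  exact p.compl_mem _ (p.sup_mem _ (p.compl_mem a ha) _ (p.compl_mem b hb))

theorem map_inf (p : PH α B) {a b : Set α} (ha : a ∈ p.dom) (hb : b ∈ p.dom) :
    p.f (a ∩ b) = p.f a ⊓ p.f b := by
  have h : a ∩ b = (aᶜ ∪ bᶜ)ᶜ := by simp
  rw [h, p.map_compl _ (p.sup_mem _ (p.compl_mem a ha) _ (p.compl_mem b hb)),
    p.map_sup _ (p.compl_mem a ha) _ (p.compl_mem b hb),
    p.map_compl a ha, p.map_compl b hb, compl_sup, compl_compl, compl_compl]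

theorem top_mem (p : PH α B) : (univ : Set α) ∈ p.dom := by
  rw [← compl_empty]; exact p.compl_mem _ p.bot_mem

theorem map_top (p : PH α B) : p.f univ = ⊤ := by
  rw [← compl_empty, p.map_compl _ p.bot_mem, p.map_bot, compl_bot]

end PH


variable {α : Type u} {B : Type u} [CompleteBooleanAlgebra B]


theorem splitc (u c : B) : (u ⊓ c) ⊔ (u ⊓ cᶜ) = u := by
  rw [← inf_sup_left, sup_compl_eq_top, inf_top_eq]

theorem compl_piece (x y c : B) : ((x ⊓ c) ⊔ (y ⊓ cᶜ))ᶜ = (xᶜ ⊓ c) ⊔ (yᶜ ⊓ cᶜ) := by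
  have hc : IsCompl ((x ⊓ c) ⊔ (y ⊓ cᶜ)) ((xᶜ ⊓ c) ⊔ (yᶜ ⊓ cᶜ)) := by
    constructor
    · rw [disjoint_iff, inf_sup_right, inf_sup_left, inf_sup_left]
      have e1 : x ⊓ c ⊓ (xᶜ ⊓ c) = ⊥ := by
        rw [inf_comm x c, inf_assoc, ← inf_assoc x, inf_compl_eq_bot]; simp
      have e2 : x ⊓ c ⊓ (yᶜ ⊓ cᶜ) = ⊥ := by
        rw [inf_assoc, inf_comm (yᶜ), ← inf_assoc c, inf_compl_eq_bot]; simp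
      have e3 : y ⊓ cᶜ ⊓ (xᶜ ⊓ c) = ⊥ := by
        rw [inf_assoc, inf_comm (xᶜ), ← inf_assoc cᶜ, compl_inf_eq_bot]; simp
      have e4 : y ⊓ cᶜ ⊓ (yᶜ ⊓ cᶜ) = ⊥ := by
        rw [inf_comm y cᶜ, inf_assoc, ← inf_assoc y, inf_compl_eq_bot]; simp
      rw [e1, e2, e3, e4]; simp
    · rw [codisjoint_iff]
      have : (x ⊓ c ⊔ y ⊓ cᶜ) ⊔ (xᶜ ⊓ c ⊔ yᶜ ⊓ cᶜ) = ((x ⊓ c) ⊔ (xᶜ ⊓ c)) ⊔ ((y ⊓ cᶜ) ⊔ (yᶜ ⊓ cᶜ)) := by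
        ac_rfl
      rw [this, ← inf_sup_right, ← inf_sup_right]
      simp
  exact hc.compl_eq


namespace PH

/-- The sup of values on elements of the domain below `s`. -/
def cc (p : PH α B) (s : Set α) : B := ⨆ a : {a // a ∈ p.dom ∧ a ⊆ s}, p.f a

theorem f_inf_cc_eq_bot (p : PH α B) {s d : Set α} (hd : d ∈ p.dom) (hds : d ∩ s = ∅) :
    p.f d ⊓ p.cc s = ⊥ := by
  rw [cc, inf_iSup_eq]
  apply iSup_eq_bot.2
  rintro ⟨a, ha, has⟩
  have h1 : d ∩ a = ∅ := by
    apply eq_empty_of_subset_empty; rw [← hds]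
    exact inter_subset_inter_right d has
  rw [← p.map_inf hd ha, h1, p.map_bot]

theorem f_le_cc (p : PH α B) {s d : Set α} (hd : d ∈ p.dom) (hds : d ⊆ s) :
    p.f d ≤ p.cc s :=
  le_iSup (fun a : {a // a ∈ p.dom ∧ a ⊆ s} => p.f a.1) ⟨d, hd, hds⟩

theorem f_inf_cc_compl_eq_bot (p : PH α B) {s d : Set α} (hd : d ∈ p.dom) (hds : d ⊆ s) :
    p.f d ⊓ (p.cc s)ᶜ = ⊥ := by
  have h := p.f_le_cc hd hds
  apply le_bot_iff.mp
  calc p.f d ⊓ (p.cc s)ᶜ ≤ p.cc s ⊓ (p.cc s)ᶜ := inf_le_inf_right _ h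
  _ = ⊥ := inf_compl_eq_bot


/-- The value function of the one-step extension. -/
def extf (p : PH α B) (s : Set α) : Set α → B :=
  fun x => (⨆ a : {a // a ∈ p.dom ∧ a ∩ s ⊆ x}, p.f a ⊓ p.cc s) ⊔
           (⨆ b : {b // b ∈ p.dom ∧ b ∩ sᶜ ⊆ x}, p.f b ⊓ (p.cc s)ᶜ)

theorem extf_eval (p : PH α B) {s x a b : Set α} (ha : a ∈ p.dom) (hb : b ∈ p.dom)
    (hx : x = (a ∩ s) ∪ (b ∩ sᶜ)) :
    p.extf s x = (p.f a ⊓ p.cc s) ⊔ (p.f b ⊓ (p.cc s)ᶜ) := by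
  subst hx
  apply le_antisymm
  · apply sup_le
    · refine _root_.le_trans ?_ le_sup_left
      apply iSup_le
      rintro ⟨a', ha', hsub⟩
      have h1 : a' ∩ aᶜ ∩ s = ∅ := by
        ext z
        simp only [mem_inter_iff, mem_compl_iff, mem_empty_iff_false, iff_false]
        rintro ⟨⟨hza', hzac⟩, hzs⟩
        rcases hsub ⟨hza', hzs⟩ with h | h
        · exact hzac h.1
        · exact h.2 hzs
      have hd : a' ∩ aᶜ ∈ p.dom := p.inf_mem ha' (p.compl_mem a ha)
      have h3 : p.f (a' ∩ aᶜ) ⊓ p.cc s = ⊥ := p.f_inf_cc_eq_bot hd h1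
      have h4 : p.f a' ⊓ p.cc s =
          (p.f a' ⊓ p.f a ⊓ p.cc s) ⊔ (p.f (a' ∩ aᶜ) ⊓ p.cc s) := by
        rw [p.map_inf ha' (p.compl_mem a ha), p.map_compl a ha, ← inf_sup_right,
          ← inf_sup_left, sup_compl_eq_top, inf_top_eq]
      rw [h4, h3, sup_bot_eq]
      exact inf_le_inf_right _ inf_le_right
    · refine _root_.le_trans ?_ le_sup_right
      apply iSup_le
      rintro ⟨b', hb', hsub⟩
      have h1 : b' ∩ bᶜ ∩ sᶜ = ∅ := by
        ext z
        simp only [mem_inter_iff, mem_compl_iff, mem_empty_iff_false, iff_false]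
        rintro ⟨⟨hzb', hzbc⟩, hzs⟩
        rcases hsub ⟨hzb', hzs⟩ with h | h
        · exact hzs h.2
        · exact hzbc h.1
      have hd : b' ∩ bᶜ ∈ p.dom := p.inf_mem hb' (p.compl_mem b hb)
      have hsub2 : b' ∩ bᶜ ⊆ s := by
        intro z hz
        by_contra hzs
        exact absurd (show z ∈ b' ∩ bᶜ ∩ sᶜ from ⟨hz, hzs⟩) (by rw [h1]; simp)
      have h3 : p.f (b' ∩ bᶜ) ⊓ (p.cc s)ᶜ = ⊥ := p.f_inf_cc_compl_eq_bot hd hsub2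
      have h4 : p.f b' ⊓ (p.cc s)ᶜ =
          (p.f b' ⊓ p.f b ⊓ (p.cc s)ᶜ) ⊔ (p.f (b' ∩ bᶜ) ⊓ (p.cc s)ᶜ) := by
        rw [p.map_inf hb' (p.compl_mem b hb), p.map_compl b hb, ← inf_sup_right,
          ← inf_sup_left, sup_compl_eq_top, inf_top_eq]
      rw [h4, h3, sup_bot_eq]
      exact inf_le_inf_right _ inf_le_right
  · apply sup_le_sup
    · exact le_iSup (fun a' : {a' // a' ∈ p.dom ∧ a' ∩ s ⊆ (a ∩ s) ∪ (b ∩ sᶜ)} =>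
        p.f a'.1 ⊓ p.cc s) ⟨a, ha, subset_union_left⟩
    · exact le_iSup (fun b' : {b' // b' ∈ p.dom ∧ b' ∩ sᶜ ⊆ (a ∩ s) ∪ (b ∩ sᶜ)} =>
        p.f b'.1 ⊓ (p.cc s)ᶜ) ⟨b, hb, subset_union_right⟩

/-- One-step extension of a partial homomorphism by the set `s`. -/
def ext (p : PH α B) (s : Set α) : PH α B where
  dom := {x | ∃ a ∈ p.dom, ∃ b ∈ p.dom, x = (a ∩ s) ∪ (b ∩ sᶜ)}
  f := p.extf s
  bot_mem := ⟨∅, p.bot_mem, ∅, p.bot_mem, by simp⟩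
  compl_mem := by
    rintro x ⟨a, ha, b, hb, rfl⟩
    refine ⟨aᶜ, p.compl_mem a ha, bᶜ, p.compl_mem b hb, ?_⟩
    ext z; by_cases hz : z ∈ s <;> simp [hz]
  sup_mem := by
    rintro x ⟨a1, ha1, b1, hb1, rfl⟩ y ⟨a2, ha2, b2, hb2, rfl⟩
    refine ⟨a1 ∪ a2, p.sup_mem _ ha1 _ ha2, b1 ∪ b2, p.sup_mem _ hb1 _ hb2, ?_⟩
    ext z; by_cases hz : z ∈ s <;> simp [hz] <;> tauto
  map_bot := by
    rw [show (∅ : Set α) = (∅ ∩ s) ∪ (∅ ∩ sᶜ) by simp] at *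
    rw [p.extf_eval p.bot_mem p.bot_mem rfl, p.map_bot]
    simp
  map_sup := by
    rintro x ⟨a1, ha1, b1, hb1, rfl⟩ y ⟨a2, ha2, b2, hb2, rfl⟩
    have hu : ((a1 ∩ s) ∪ (b1 ∩ sᶜ)) ∪ ((a2 ∩ s) ∪ (b2 ∩ sᶜ))
        = ((a1 ∪ a2) ∩ s) ∪ ((b1 ∪ b2) ∩ sᶜ) := by
      ext z; by_cases hz : z ∈ s <;> simp [hz] <;> tauto
    rw [p.extf_eval (p.sup_mem _ ha1 _ ha2) (p.sup_mem _ hb1 _ hb2) hu,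
      p.extf_eval ha1 hb1 rfl, p.extf_eval ha2 hb2 rfl,
      p.map_sup _ ha1 _ ha2, p.map_sup _ hb1 _ hb2, inf_sup_right, inf_sup_right]
    ac_rfl
  map_compl := by
    rintro x ⟨a, ha, b, hb, rfl⟩
    have hu : ((a ∩ s) ∪ (b ∩ sᶜ))ᶜ = (aᶜ ∩ s) ∪ (bᶜ ∩ sᶜ) := by
      ext z; by_cases hz : z ∈ s <;> simp [hz]
    rw [p.extf_eval (p.compl_mem a ha) (p.compl_mem b hb) hu,
      p.extf_eval ha hb rfl, p.map_compl a ha, p.map_compl b hb, compl_piece]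

theorem le_ext (p : PH α B) (s : Set α) : p.le (p.ext s) := by
  constructor
  · intro a ha
    exact ⟨a, ha, a, ha, by rw [← inter_union_distrib_left, union_compl_self, inter_univ]⟩
  · intro a ha
    show p.extf s a = p.f a
    rw [p.extf_eval ha ha (by rw [← inter_union_distrib_left, union_compl_self, inter_univ]),
      splitc]

theorem self_mem_ext (p : PH α B) (s : Set α) : s ∈ (p.ext s).dom :=
  ⟨univ, p.top_mem, ∅, p.bot_mem, by simp⟩

/-- Every partial homomorphism extends to a total one (Sikorski's extension theorem). -/
theorem exists_total (p₀ : PH α B) : ∃ m : PH α B, p₀.le m ∧ ∀ x : Set α, x ∈ m.dom := by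
  let T := {q : PH α B // p₀.le q}
  have hub : ∀ c : Set T, IsChain (fun a b : T => a.1.le b.1) c →
      ∃ ub : T, ∀ a ∈ c, a.1.le ub.1 := by
    intro c hc
    rcases c.eq_empty_or_nonempty with rfl | ⟨p1, hp1⟩
    · exact ⟨⟨p₀, p₀.le_refl⟩, by simp⟩
    · have consist : ∀ p ∈ c, ∀ q ∈ c, ∀ x, x ∈ p.1.dom → x ∈ q.1.dom →
          p.1.f x = q.1.f x := by
        intro p hp q hq x hxp hxq
        by_cases hpq : p = q
        · subst hpq; rfl
        · rcases hc hp hq hpq with h | h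
          · exact (h.2 x hxp).symm
          · exact h.2 x hxq
      have hdir : ∀ p ∈ c, ∀ q ∈ c, ∃ w ∈ c, p.1.le w.1 ∧ q.1.le w.1 := by
        intro p hp q hq
        by_cases hpq : p = q
        · subst hpq; exact ⟨p, hp, p.1.le_refl, p.1.le_refl⟩
        · rcases hc hp hq hpq with h | h
          · exact ⟨q, hq, h, q.1.le_refl⟩
          · exact ⟨p, hp, p.1.le_refl, h⟩
      classical
      let D : Set (Set α) := ⋃ p ∈ c, p.1.dom
      have hmemD : ∀ x : Set α, x ∈ D ↔ ∃ p ∈ c, x ∈ p.1.dom := fun x => by simp [D]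
      let F : Set α → B := fun x =>
        if h : ∃ p ∈ c, x ∈ p.1.dom then h.choose.1.f x else ⊥
      have hF : ∀ p ∈ c, ∀ x ∈ p.1.dom, F x = p.1.f x := by
        intro p hp x hx
        have hex : ∃ q ∈ c, x ∈ q.1.dom := ⟨p, hp, hx⟩
        show dite _ _ _ = _
        rw [dif_pos hex]
        exact consist _ hex.choose_spec.1 p hp x hex.choose_spec.2 hx
      refine ⟨⟨⟨D, F, ?_, ?_, ?_, ?_, ?_, ?_⟩, ?_⟩, ?_⟩
      · exact (hmemD _).2 ⟨p1, hp1, p1.1.bot_mem⟩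
      · intro a ha
        obtain ⟨p, hp, hap⟩ := (hmemD a).1 ha
        exact (hmemD _).2 ⟨p, hp, p.1.compl_mem a hap⟩
      · intro a ha b hb
        obtain ⟨p, hp, hap⟩ := (hmemD a).1 ha
        obtain ⟨q, hq, hbq⟩ := (hmemD b).1 hb
        obtain ⟨w, hw, hpw, hqw⟩ := hdir p hp q hq
        exact (hmemD _).2 ⟨w, hw, w.1.sup_mem a (hpw.1 hap) b (hqw.1 hbq)⟩
      · rw [hF p1 hp1 ∅ p1.1.bot_mem]; exact p1.1.map_bot
      · intro a ha b hb
        obtain ⟨p, hp, hap⟩ := (hmemD a).1 ha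
        obtain ⟨q, hq, hbq⟩ := (hmemD b).1 hb
        obtain ⟨w, hw, hpw, hqw⟩ := hdir p hp q hq
        have haw := hpw.1 hap
        have hbw := hqw.1 hbq
        rw [hF w hw _ (w.1.sup_mem a haw b hbw), hF w hw a haw, hF w hw b hbw,
          w.1.map_sup a haw b hbw]
      · intro a ha
        obtain ⟨p, hp, hap⟩ := (hmemD a).1 ha
        rw [hF p hp _ (p.1.compl_mem a hap), hF p hp a hap, p.1.map_compl a hap]
      · refine ⟨fun a ha => (hmemD a).2 ⟨p1, hp1, p1.2.1 ha⟩, fun a ha => ?_⟩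
        show F a = p₀.f a
        rw [hF p1 hp1 a (p1.2.1 ha)]
        exact p1.2.2 a ha
      · intro p hp
        exact ⟨fun a ha => (hmemD a).2 ⟨p, hp, ha⟩, fun a ha => hF p hp a ha⟩
  obtain ⟨m, hmax⟩ := exists_maximal_of_chains_bounded
    (r := fun a b : T => a.1.le b.1) hub (fun hab hbc => PH.le_trans hab hbc)
  refine ⟨m.1, m.2, fun s => ?_⟩
  by_contra hs
  have h1 : m.1.le (m.1.ext s) := m.1.le_ext s
  have h2 := hmax ⟨m.1.ext s, le_trans m.2 h1⟩ h1
  exact hs (h2.1 (m.1.self_mem_ext s))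

end PH


variable {α : Type u} {B : Type u} [CompleteBooleanAlgebra B]

section Base

variable (A' : B → Set α)

/-- The finite Boolean combination of the family `A'` given by a pair of finite sets. -/
def Cmb (p : Finset B × Finset B) : Set α :=
  {z | (∀ b ∈ p.1, z ∈ A' b) ∧ ∀ b ∈ p.2, z ∉ A' b}

/-- Finite unions of combinations. -/
def UU : List (Finset B × Finset B) → Set α
  | [] => ∅
  | p :: L => Cmb A' p ∪ UU L

/-- The value in `B` of a combination. -/
def vB (p : Finset B × Finset B) : B := p.1.inf id ⊓ p.2.inf (·ᶜ)

/-- The value in `B` of a finite union of combinations. -/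
def vL : List (Finset B × Finset B) → B
  | [] => ⊥
  | p :: L => vB p ⊔ vL L

omit [CompleteBooleanAlgebra B] in
theorem mem_UU {L : List (Finset B × Finset B)} {z : α} :
    z ∈ UU A' L ↔ ∃ p ∈ L, z ∈ Cmb A' p := by
  induction L with
  | nil => simp [UU]
  | cons p L ih => simp [UU, ih]

omit [CompleteBooleanAlgebra B] in
theorem Cmb_subset_UU {L : List (Finset B × Finset B)} {p : Finset B × Finset B}
    (hp : p ∈ L) : Cmb A' p ⊆ UU A' L :=
  fun _ hz => (mem_UU A').2 ⟨p, hp, hz⟩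

omit [CompleteBooleanAlgebra B] in
theorem UU_append (L₁ L₂ : List (Finset B × Finset B)) :
    UU A' (L₁ ++ L₂) = UU A' L₁ ∪ UU A' L₂ := by
  induction L₁ with
  | nil => simp [UU]
  | cons p L ih => simp [UU, ih, union_assoc]

theorem vL_append (L₁ L₂ : List (Finset B × Finset B)) :
    vL (L₁ ++ L₂) = vL L₁ ⊔ vL (L₂ : List (Finset B × Finset B)) := by
  induction L₁ with
  | nil => simp [vL]
  | cons p L ih => simp [vL, ih, sup_assoc]

theorem vL_le {L : List (Finset B × Finset B)} {y : B} (h : ∀ p ∈ L, vB p ≤ y) :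
    vL L ≤ y := by
  induction L with
  | nil => exact bot_le
  | cons p L ih =>
    exact sup_le (h p (List.mem_cons_self)) (ih fun q hq => h q (List.mem_cons_of_mem _ hq))

theorem vB_bot {F G : Finset B} {b : B} (hbF : b ∈ F) (hbG : b ∈ G) : vB (F, G) = ⊥ := by
  apply le_bot_iff.mp
  calc vB (F, G) ≤ b ⊓ bᶜ :=
        inf_le_inf (Finset.inf_le hbF) (Finset.inf_le (f := (·ᶜ)) hbG)
    _ = ⊥ := inf_compl_eq_bot

theorem compl_finset_inf {ι : Type*} (s : Finset ι) (f : ι → B) :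
    (s.inf f)ᶜ = s.sup (fun i => (f i)ᶜ) := by
  classical
  induction s using Finset.induction with
  | empty => simp
  | insert _ _ h ih => simp [Finset.inf_insert, Finset.sup_insert, compl_inf, ih]

variable (Sm : Set α → Prop)

/-- The key combinatorial lemma. -/
theorem main_lemma (hSm_mono : ∀ {x y : Set α}, y ⊆ x → Sm x → Sm y)
    (hindep : ∀ F G : Finset B, Disjoint F G → ¬ Sm (Cmb A' (F, G))) :
    ∀ L : List (Finset B × Finset B), ∀ F G : Finset B,
    Sm (Cmb A' (F, G) \ UU A' L) → vB (F, G) ≤ vL L := by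
  classical
  intro L
  induction L with
  | nil =>
    intro F G h
    rw [show UU A' ([] : List (Finset B × Finset B)) = ∅ from rfl, diff_empty] at h
    by_cases hFG : Disjoint F G
    · exact absurd h (hindep F G hFG)
    · obtain ⟨b, hbF, hbG⟩ := Finset.not_disjoint_iff.1 hFG
      rw [vB_bot hbF hbG]
      exact bot_le
  | cons p L ih =>
    intro F G h
    obtain ⟨F₀, G₀⟩ := p
    show vB (F, G) ≤ vB (F₀, G₀) ⊔ vL L
    rw [← sdiff_le_iff, _root_.sdiff_eq]
    have hcompl : (vB (F₀, G₀))ᶜ = F₀.sup (·ᶜ) ⊔ G₀.sup id := by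
      rw [vB, compl_inf, compl_finset_inf, compl_finset_inf]
      congr 1
      exact Finset.sup_congr rfl (fun b _ => compl_compl b)
    rw [hcompl, inf_sup_left]
    apply sup_le
    · rw [Finset.sup_inf_distrib_left]
      apply Finset.sup_le
      intro b hb
      have hv : vB (F, G) ⊓ bᶜ = vB (F, insert b G) := by
        rw [vB, vB, Finset.inf_insert]
        show F.inf id ⊓ G.inf (·ᶜ) ⊓ bᶜ = F.inf id ⊓ (bᶜ ⊓ G.inf (·ᶜ))
        ac_rfl
      rw [hv]
      apply ih
      apply hSm_mono ?_ h
      rintro z ⟨⟨hz1, hz2⟩, hz3⟩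
      refine ⟨⟨hz1, fun b' hb' => hz2 b' (Finset.mem_insert_of_mem hb')⟩, ?_⟩
      intro hzU
      rcases (mem_UU A').1 hzU with ⟨q, hq, hzq⟩
      rcases List.mem_cons.1 hq with rfl | hqL
      · exact hz2 b (Finset.mem_insert_self b G) (hzq.1 b hb)
      · exact hz3 ((mem_UU A').2 ⟨q, hqL, hzq⟩)
    · rw [Finset.sup_inf_distrib_left]
      apply Finset.sup_le
      intro b hb
      have hv : vB (F, G) ⊓ id b = vB (insert b F, G) := by
        rw [vB, vB, Finset.inf_insert]
        show F.inf id ⊓ G.inf (·ᶜ) ⊓ id b = id b ⊓ F.inf id ⊓ G.inf (·ᶜ)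
        ac_rfl
      rw [hv]
      apply ih
      apply hSm_mono ?_ h
      rintro z ⟨⟨hz1, hz2⟩, hz3⟩
      refine ⟨⟨fun b' hb' => hz1 b' (Finset.mem_insert_of_mem hb'), hz2⟩, ?_⟩
      intro hzU
      rcases (mem_UU A').1 hzU with ⟨q, hq, hzq⟩
      rcases List.mem_cons.1 hq with rfl | hqL
      · exact hzq.2 b hb (hz1 b (Finset.mem_insert_self b F))
      · exact hz3 ((mem_UU A').2 ⟨q, hqL, hzq⟩)

/-- The base function. -/
def f0 (x : Set α) : B := ⨆ p : {p : Finset B × Finset B // Sm (Cmb A' p \ x)}, vB p.1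

theorem f0_eq (hSm_mono : ∀ {x y : Set α}, y ⊆ x → Sm x → Sm y)
    (hSm_union : ∀ {x y : Set α}, Sm x → Sm y → Sm (x ∪ y))
    (hindep : ∀ F G : Finset B, Disjoint F G → ¬ Sm (Cmb A' (F, G)))
    {x : Set α} {L : List (Finset B × Finset B)} (hL : Sm (x ∆ UU A' L)) :
    f0 A' Sm x = vL L := by
  apply le_antisymm
  · apply iSup_le
    rintro ⟨⟨F, G⟩, hp⟩
    have h1 : Sm (Cmb A' (F, G) \ UU A' L) := by
      apply hSm_mono ?_ (hSm_union hp (hSm_mono (subset_refl _) hL))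
      rintro z ⟨hz1, hz2⟩
      by_cases hzx : z ∈ x
      · exact Or.inr (Or.inl ⟨hzx, hz2⟩)
      · exact Or.inl ⟨hz1, hzx⟩
    exact main_lemma A' Sm hSm_mono hindep L F G h1
  · apply vL_le
    intro p hp
    have h1 : Sm (Cmb A' p \ x) := by
      apply hSm_mono ?_ hL
      rintro z ⟨hz1, hz2⟩
      exact Or.inr ⟨Cmb_subset_UU A' hp hz1, hz2⟩
    exact le_iSup (fun q : {q : Finset B × Finset B // Sm (Cmb A' q \ x)} => vB q.1) ⟨p, h1⟩


omit [CompleteBooleanAlgebra B] in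
theorem Cmb_merge [DecidableEq B] (p q : Finset B × Finset B) :
    Cmb A' (p.1 ∪ q.1, p.2 ∪ q.2) = Cmb A' p ∩ Cmb A' q := by
  ext z
  simp only [Cmb, mem_setOf_eq, mem_inter_iff, Finset.mem_union]
  constructor
  · rintro ⟨h1, h2⟩
    exact ⟨⟨fun b hb => h1 b (Or.inl hb), fun b hb => h2 b (Or.inl hb)⟩,
      ⟨fun b hb => h1 b (Or.inr hb), fun b hb => h2 b (Or.inr hb)⟩⟩
  · rintro ⟨⟨h1, h2⟩, h3, h4⟩
    exact ⟨fun b hb => hb.elim (h1 b) (h3 b), fun b hb => hb.elim (h2 b) (h4 b)⟩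

theorem vB_merge [DecidableEq B] (p q : Finset B × Finset B) :
    vB (p.1 ∪ q.1, p.2 ∪ q.2) = vB p ⊓ vB q := by
  show (p.1 ∪ q.1).inf id ⊓ (p.2 ∪ q.2).inf (·ᶜ) = p.1.inf id ⊓ p.2.inf (·ᶜ) ⊓ (q.1.inf id ⊓ q.2.inf (·ᶜ))
  rw [Finset.inf_union, Finset.inf_union]
  ac_rfl

omit [CompleteBooleanAlgebra B] in
theorem exists_UU_inter (L₁ L₂ : List (Finset B × Finset B)) :
    ∃ L₃, UU A' L₃ = UU A' L₁ ∩ UU A' L₂ := by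
  classical
  induction L₁ with
  | nil => exact ⟨[], by simp [UU]⟩
  | cons p L ih =>
    obtain ⟨L₃, hL₃⟩ := ih
    set L₄ := L₂.map fun q => (p.1 ∪ q.1, p.2 ∪ q.2) with hL₄def
    have h4 : UU A' L₄ = Cmb A' p ∩ UU A' L₂ := by
      ext z
      simp only [mem_UU, hL₄def, List.mem_map, mem_inter_iff]
      constructor
      · rintro ⟨q', ⟨q, hq, rfl⟩, hzq⟩
        rw [Cmb_merge] at hzq
        exact ⟨hzq.1, ⟨q, hq, hzq.2⟩⟩
      · rintro ⟨hzp, q, hq, hzq⟩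
        exact ⟨_, ⟨q, hq, rfl⟩, by rw [Cmb_merge]; exact ⟨hzp, hzq⟩⟩
    refine ⟨L₄ ++ L₃, ?_⟩
    rw [UU_append, h4, hL₃]
    show (Cmb A' p ∩ UU A' L₂) ∪ (UU A' L ∩ UU A' L₂) = (Cmb A' p ∪ UU A' L) ∩ UU A' L₂
    rw [union_inter_distrib_right]

omit [CompleteBooleanAlgebra B] in
theorem exists_UU_compl (L : List (Finset B × Finset B)) :
    ∃ L', UU A' L' = (UU A' L)ᶜ := by
  induction L with
  | nil =>
    refine ⟨[(∅, ∅)], ?_⟩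
    show Cmb A' (∅, ∅) ∪ ∅ = (∅ : Set α)ᶜ
    ext z; simp [Cmb]
  | cons p L ih =>
    obtain ⟨L', hL'⟩ := ih
    set Lp := p.1.toList.map (fun b => ((∅ : Finset B), ({b} : Finset B)))
      ++ p.2.toList.map (fun b => (({b} : Finset B), (∅ : Finset B))) with hLpdef
    have hCp : UU A' Lp = (Cmb A' p)ᶜ := by
      ext z
      simp only [mem_UU, hLpdef, List.mem_append, List.mem_map, Finset.mem_toList,
        mem_compl_iff, Cmb, mem_setOf_eq]
      constructor
      · rintro ⟨q, (⟨b, hb, rfl⟩ | ⟨b, hb, rfl⟩), hzq⟩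
        · rintro ⟨h1, _⟩
          exact hzq.2 b (Finset.mem_singleton_self b) (h1 b hb)
        · rintro ⟨_, h2⟩
          exact h2 b hb (hzq.1 b (Finset.mem_singleton_self b))
      · intro h
        by_cases h1 : ∀ b ∈ p.1, z ∈ A' b
        · have h2 : ¬ ∀ b ∈ p.2, z ∉ A' b := fun h2 => h ⟨h1, h2⟩
          push_neg at h2
          obtain ⟨b, hb, hzb⟩ := h2
          refine ⟨({b}, ∅), Or.inr ⟨b, hb, rfl⟩, ?_, ?_⟩
          · intro b' hb'
            rw [Finset.mem_singleton.1 hb']; exact hzb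
          · intro b' hb'
            exact absurd hb' (Finset.notMem_empty b')
        · push_neg at h1
          obtain ⟨b, hb, hzb⟩ := h1
          refine ⟨(∅, {b}), Or.inl ⟨b, hb, rfl⟩, ?_, ?_⟩
          · intro b' hb'
            exact absurd hb' (Finset.notMem_empty b')
          · intro b' hb'
            rw [Finset.mem_singleton.1 hb']; exact hzb
    obtain ⟨L₃, hL₃⟩ := exists_UU_inter A' Lp L'
    refine ⟨L₃, ?_⟩
    rw [hL₃, hCp, hL']
    show (Cmb A' p)ᶜ ∩ (UU A' L)ᶜ = (Cmb A' p ∪ UU A' L)ᶜ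
    rw [compl_union]


theorem symmDiff_union_subset (x y u v : Set α) :
    (x ∪ y) ∆ (u ∪ v) ⊆ (x ∆ u) ∪ (y ∆ v) := by
  intro z hz
  simp only [Set.mem_symmDiff, mem_union] at hz ⊢
  tauto

theorem vB_inf_vL {p : Finset B × Finset B} {L : List (Finset B × Finset B)}
    (h : ∀ q ∈ L, vB p ⊓ vB q = (⊥ : B)) : vB p ⊓ vL L = ⊥ := by
  induction L with
  | nil => simp [vL]
  | cons q L ih =>
    rw [show vL (q :: L) = vB q ⊔ vL L from rfl, inf_sup_left,
      h q (List.mem_cons_self), ih fun r hr => h r (List.mem_cons_of_mem _ hr), sup_bot_eq]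

theorem vL_inf_vL {L L' : List (Finset B × Finset B)}
    (h : ∀ p ∈ L, ∀ q ∈ L', vB p ⊓ vB q = (⊥ : B)) : vL L ⊓ vL L' = ⊥ := by
  induction L with
  | nil => simp [vL]
  | cons p L ih =>
    rw [show vL (p :: L) = vB p ⊔ vL L from rfl, inf_sup_right,
      vB_inf_vL (h p (List.mem_cons_self)),
      ih fun r hr => h r (List.mem_cons_of_mem _ hr), sup_bot_eq]

theorem vL_top : vL ([((∅ : Finset B), (∅ : Finset B))]) = (⊤ : B) := by
  simp [vL, vB]

omit [CompleteBooleanAlgebra B] in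
theorem UU_top : UU A' [((∅ : Finset B), (∅ : Finset B))] = (Set.univ : Set α) := by
  show Cmb A' (∅, ∅) ∪ ∅ = Set.univ
  ext z; simp [Cmb]

section P0

variable (Sm : Set α → Prop)
variable (hSm_empty : Sm ∅)
variable (hSm_mono : ∀ {x y : Set α}, y ⊆ x → Sm x → Sm y)
variable (hSm_union : ∀ {x y : Set α}, Sm x → Sm y → Sm (x ∪ y))
variable (hindep : ∀ F G : Finset B, Disjoint F G → ¬ Sm (Cmb A' (F, G)))

include hSm_empty hSm_mono hSm_union hindep

theorem exists_p0 : ∃ p : PH α B,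
    (∀ b : B, A' b ∈ p.dom ∧ p.f (A' b) = b) ∧
    (∀ x : Set α, Sm x → x ∈ p.dom ∧ p.f x = ⊥) := by
  classical
  have hdom : ∀ x : Set α, Sm x → Sm (x ∆ UU A' []) := by
    intro x hx
    rw [show UU A' ([] : List (Finset B × Finset B)) = ∅ from rfl, ← Set.bot_eq_empty,
      symmDiff_bot]
    exact hx
  have hSm_self : ∀ x : Set α, Sm x → f0 A' Sm x = ⊥ := by
    intro x hx
    rw [f0_eq A' Sm hSm_mono hSm_union hindep (hdom x hx)]
    rfl
  have hf0top : f0 A' Sm univ = ⊤ := by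
    rw [f0_eq A' Sm hSm_mono hSm_union hindep (L := [(∅, ∅)]) (by
      rw [UU_top, symmDiff_self]
      exact hSm_empty), vL_top]
  refine ⟨⟨{x | ∃ L, Sm (x ∆ UU A' L)}, f0 A' Sm, ?_, ?_, ?_, ?_, ?_, ?_⟩, ?_, ?_⟩
  · exact ⟨[], hdom ∅ hSm_empty⟩
  · rintro a ⟨L, hL⟩
    obtain ⟨L', hL'⟩ := exists_UU_compl A' L
    refine ⟨L', ?_⟩
    rw [hL', compl_symmDiff_compl]
    exact hL
  · rintro a ⟨L₁, h₁⟩ b ⟨L₂, h₂⟩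
    refine ⟨L₁ ++ L₂, ?_⟩
    rw [UU_append]
    exact hSm_mono (symmDiff_union_subset a b _ _) (hSm_union h₁ h₂)
  · exact hSm_self ∅ hSm_empty
  · rintro a ⟨L₁, h₁⟩ b ⟨L₂, h₂⟩
    have h3 : Sm ((a ∪ b) ∆ UU A' (L₁ ++ L₂)) := by
      rw [UU_append]
      exact hSm_mono (symmDiff_union_subset a b _ _) (hSm_union h₁ h₂)
    rw [f0_eq A' Sm hSm_mono hSm_union hindep h₁,
      f0_eq A' Sm hSm_mono hSm_union hindep h₂,
      f0_eq A' Sm hSm_mono hSm_union hindep h3, vL_append]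
  · rintro a ⟨L, hL⟩
    obtain ⟨L', hL'⟩ := exists_UU_compl A' L
    have hc : Sm (aᶜ ∆ UU A' L') := by
      rw [hL', compl_symmDiff_compl]; exact hL
    rw [f0_eq A' Sm hSm_mono hSm_union hindep hL,
      f0_eq A' Sm hSm_mono hSm_union hindep hc]
    have hdisj : vL L ⊓ vL L' = (⊥ : B) := by
      apply vL_inf_vL
      intro p hp q hq
      rw [← vB_merge]
      apply le_bot_iff.mp
      have hempty : Cmb A' (p.1 ∪ q.1, p.2 ∪ q.2) = ∅ := by
        rw [Cmb_merge]
        apply eq_empty_of_subset_empty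
        intro z ⟨hz1, hz2⟩
        have := Cmb_subset_UU A' hp hz1
        have h2 := Cmb_subset_UU A' hq hz2
        rw [hL'] at h2
        exact absurd this h2
      have := main_lemma A' Sm hSm_mono hindep [] (p.1 ∪ q.1) (p.2 ∪ q.2)
        (by rw [show UU A' ([] : List (Finset B × Finset B)) = ∅ from rfl, diff_empty, hempty]
            exact hSm_empty)
      exact this
    have hcod : vL L ⊔ vL L' = (⊤ : B) := by
      rw [← vL_append, ← hf0top]
      rw [f0_eq A' Sm hSm_mono hSm_union hindep (L := L ++ L') (by
        rw [UU_append, hL', union_compl_self, symmDiff_self]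
        exact hSm_empty)]
    have : IsCompl (vL (B := B) L) (vL L') :=
      isCompl_iff.2 ⟨disjoint_iff.2 hdisj, codisjoint_iff.2 hcod⟩
    exact this.compl_eq.symm
  · intro b
    have hUb : UU A' [(({b} : Finset B), (∅ : Finset B))] = A' b := by
      show Cmb A' ({b}, ∅) ∪ ∅ = A' b
      rw [union_empty]
      ext z
      simp [Cmb]
    have hmem : Sm ((A' b) ∆ UU A' [(({b} : Finset B), (∅ : Finset B))]) := by
      rw [hUb, symmDiff_self]
      exact hSm_empty
    refine ⟨⟨[({b}, ∅)], hmem⟩, ?_⟩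
    show f0 A' Sm (A' b) = b
    rw [f0_eq A' Sm hSm_mono hSm_union hindep hmem]
    simp [vL, vB]
  · exact fun x hx => ⟨⟨[], hdom x hx⟩, hSm_self x hx⟩

end P0

end Base

/-- Trace of a set on a finset. -/
def tr (X : Set α) (s : Finset α) : Finset α :=
  @Finset.filter _ (fun t => t ∈ X) (Classical.decPred _) s

theorem mem_tr {X : Set α} {s : Finset α} {t : α} : t ∈ tr X s ↔ t ∈ s ∧ t ∈ X :=
  @Finset.mem_filter _ _ (Classical.decPred _) _ _

/-- The Hausdorff independent family, transported to `α` by a bijection `g`. -/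
def memA (g : α ≃ Finset α × Finset (Finset α)) (X : Set α) : Set α :=
  {z | tr X (g z).1 ∈ (g z).2}

omit [CompleteBooleanAlgebra B] in
theorem indep_card [Infinite α] (g : α ≃ Finset α × Finset (Finset α)) (ι : B ↪ Set α)
    (F G : Finset B) (hFG : Disjoint F G) :
    #α ≤ #(Cmb (fun b => memA g (ι b)) (F, G)) := by
  classical
  have hpt : ∀ q : {q : B × B // q ∈ F ×ˢ G}, ((ι q.1.1) ∆ (ι q.1.2)).Nonempty := by
    rintro ⟨⟨b, c⟩, hq⟩
    rw [Finset.mem_product] at hq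
    rw [Set.symmDiff_nonempty]
    intro h
    have hbc : b = c := ι.injective h
    exact Finset.disjoint_left.1 hFG hq.1 (hbc ▸ hq.2)
  set s₀ : Finset α := (F ×ˢ G).attach.image (fun q => (hpt q).some) with hs₀def
  have key : ∀ b ∈ F, ∀ c ∈ G, ∃ w ∈ s₀, w ∈ (ι b) ∆ (ι c) := by
    intro b hb c hc
    have hq : (b, c) ∈ F ×ˢ G := Finset.mem_product.2 ⟨hb, hc⟩
    refine ⟨(hpt ⟨(b, c), hq⟩).some, ?_, (hpt ⟨(b, c), hq⟩).some_mem⟩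
    rw [hs₀def]
    exact Finset.mem_image.2 ⟨⟨(b, c), hq⟩, Finset.mem_attach _ _, rfl⟩
  have hs₀fin : #(↑s₀ : Set α) < #α :=
    lt_of_lt_of_le (s₀.finite_toSet.lt_aleph0) (Cardinal.aleph0_le_mk α)
  rw [← Cardinal.mk_compl_of_infinite (↑s₀ : Set α) hs₀fin]
  -- the injection
  set zf : ((↑s₀ : Set α)ᶜ : Set α) → α := fun y =>
    g.symm (insert y.1 s₀, F.image fun b => tr (ι b) (insert y.1 s₀)) with hzfdef
  have hzmem : ∀ y, zf y ∈ Cmb (fun b => memA g (ι b)) (F, G) := by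
    intro y
    constructor
    · intro b hb
      show tr (ι b) (g (zf y)).1 ∈ (g (zf y)).2
      rw [hzfdef]
      rw [g.apply_symm_apply]
      exact Finset.mem_image.2 ⟨b, hb, rfl⟩
    · intro c hc
      show ¬ (tr (ι c) (g (zf y)).1 ∈ (g (zf y)).2)
      rw [hzfdef, g.apply_symm_apply]
      intro hmem
      obtain ⟨b, hb, heq⟩ := Finset.mem_image.1 hmem
      obtain ⟨w, hws₀, hw⟩ := key b hb c hc
      have hwsy : w ∈ insert y.1 s₀ := Finset.mem_insert_of_mem hws₀
      rw [Set.mem_symmDiff] at hw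
      rcases hw with ⟨hw1, hw2⟩ | ⟨hw1, hw2⟩
      · have : w ∈ tr (ι c) (insert y.1 s₀) := heq ▸ (mem_tr.2 ⟨hwsy, hw1⟩)
        exact hw2 (mem_tr.1 this).2
      · have : w ∈ tr (ι b) (insert y.1 s₀) := by
          rw [heq]
          exact mem_tr.2 ⟨hwsy, hw1⟩
        exact hw2 (mem_tr.1 this).2
  apply Cardinal.mk_le_of_injective (f := fun y => (⟨zf y, hzmem y⟩ : Cmb (fun b => memA g (ι b)) (F, G)))
  intro y y' hyy'
  have h1 : zf y = zf y' := congrArg Subtype.val hyy'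
  rw [hzfdef] at h1
  have h2 := g.symm.injective h1
  have h3 : insert y.1 s₀ = insert y'.1 s₀ := congrArg Prod.fst h2
  have h4 : y.1 ∈ insert y'.1 s₀ := h3 ▸ Finset.mem_insert_self y.1 s₀
  rcases Finset.mem_insert.1 h4 with h | h
  · exact Subtype.ext h
  · exact absurd h y.2


theorem card_lt_of_bddAbove (κ : Cardinal.{u}) (hκ : ℵ₀ ≤ κ) {x : Set κ.ord.ToType}
    (hx : BddAbove x) : #x < κ := by
  obtain ⟨a, ha⟩ := hx
  set e := (Ordinal.ToType.mk (o := κ.ord)) with hedef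
  set β : Ordinal.{u} := (e.symm a).1 with hβdef
  have hβ : β < κ.ord := (e.symm a).2
  have hβ1 : β + 1 < κ.ord := by
    rw [Ordinal.add_one_eq_succ]
    exact (Cardinal.isSuccLimit_ord hκ).succ_lt hβ
  have hinj : Function.Injective (fun z : x => (⟨(e.symm z.1).1, by
      simp only [Set.mem_Iio, Ordinal.add_one_eq_succ, Order.lt_succ_iff]
      exact Subtype.coe_le_coe.2 (e.symm.monotone (ha z.2))⟩ :
      (Iio (β + 1) : Set Ordinal.{u}))) := by
    intro z z' h
    have h1 : ((e.symm z.1).1 : Ordinal) = (e.symm z'.1).1 := by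
      have h2 := congrArg (fun t : (Iio (β + 1) : Set Ordinal.{u}) => (t : Ordinal)) h
      simpa using h2
    exact Subtype.ext (e.symm.injective (Subtype.ext h1))
  have hle : Cardinal.lift.{u+1} #x ≤ Cardinal.lift.{u} #(Iio (β + 1) : Set Ordinal.{u}) :=
    Cardinal.lift_mk_le'.2 ⟨⟨_, hinj⟩⟩
  rw [Ordinal.mk_Iio_ordinal, Cardinal.lift_lift] at hle
  have h2 : #x ≤ (β + 1).card := Cardinal.lift_le.1 hle
  exact h2.trans_lt (Cardinal.lt_ord.1 hβ1)


end PowersetOntoCBA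

/-- Let `B` be a complete Boolean algebra and `κ` an infinite cardinal with
`|B| ≤ 2^κ`.  Then there is a surjective Boolean algebra homomorphism `h` from the
powerset algebra `𝒫(κ)` (here `Set κ.ord.ToType`) onto `B` sending every bounded
subset of `κ` to `⊥`.  (Its kernel is then a uniform ideal `I` on `κ` containing all
bounded sets, with `𝒫(κ)/I ≅ B`.) -/
theorem exists_surjective_hom_powerset_onto_complete_boolean_algebra
    {B : Type u} [CompleteBooleanAlgebra B] (κ : Cardinal.{u}) (hκ : ℵ₀ ≤ κ)
    (hB : #B ≤ 2 ^ κ) :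
    ∃ h : BoundedLatticeHom (Set κ.ord.ToType) B,
      Function.Surjective h ∧
      ∀ x : Set κ.ord.ToType, BddAbove x → h x = ⊥ := by
  classical
  set α := κ.ord.ToType with hαdef
  have hmkα : #α = κ := Cardinal.mk_ord_toType κ
  haveI : Infinite α := Cardinal.infinite_iff.2 (hmkα ▸ hκ)
  -- the bijection with the Hausdorff index set
  have hcard : #(Finset α × Finset (Finset α)) = #α := by
    rw [Cardinal.mk_prod, Cardinal.lift_id, Cardinal.lift_id, Cardinal.mk_finset_of_infinite,
      Cardinal.mk_finset_of_infinite, Cardinal.mk_finset_of_infinite, hmkα,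
      Cardinal.mul_eq_self hκ]
  obtain ⟨g⟩ : Nonempty (α ≃ Finset α × Finset (Finset α)) := Cardinal.eq.1 hcard.symm
  obtain ⟨ι⟩ : Nonempty (B ↪ Set α) := by
    rw [← Cardinal.le_def, Cardinal.mk_set, hmkα]
    exact hB
  set A' : B → Set α := fun b => PowersetOntoCBA.memA g (ι b) with hA'def
  have hindep : ∀ F G : Finset B, Disjoint F G → ¬ BddAbove (PowersetOntoCBA.Cmb A' (F, G)) := by
    intro F G hFG hbdd
    have h1 := PowersetOntoCBA.indep_card (α := α) g ι F G hFG
    have h2 := PowersetOntoCBA.card_lt_of_bddAbove κ hκ hbdd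
    rw [hmkα] at h1
    exact absurd (h1.trans_lt h2) (lt_irrefl κ)
  have hSm_mono : ∀ {x y : Set α}, y ⊆ x → BddAbove x → BddAbove y :=
    fun h hx => hx.mono h
  have hSm_union : ∀ {x y : Set α}, BddAbove x → BddAbove y → BddAbove (x ∪ y) :=
    fun hx hy => hx.union hy
  obtain ⟨p₀, hp₀A, hp₀Sm⟩ :=
    PowersetOntoCBA.exists_p0 A' BddAbove bddAbove_empty hSm_mono hSm_union hindep
  obtain ⟨m, hle, htotal⟩ := PowersetOntoCBA.PH.exists_total p₀
  refine ⟨⟨⟨⟨m.f, ?_⟩, ?_⟩, ?_, ?_⟩, ?_, ?_⟩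
  · intro a b
    exact m.map_sup a (htotal a) b (htotal b)
  · intro a b
    exact m.map_inf (htotal a) (htotal b)
  · show m.f univ = ⊤
    exact m.map_top
  · show m.f ∅ = ⊥
    exact m.map_bot
  · intro b
    obtain ⟨hmem, hval⟩ := hp₀A b
    refine ⟨A' b, ?_⟩
    show m.f (A' b) = b
    rw [hle.2 (A' b) hmem]
    exact hval
  · intro x hx
    obtain ⟨hmem, hval⟩ := hp₀Sm x hx
    show m.f x = ⊥
    rw [hle.2 x hmem]
    exact hval
end
end

section
/- For every cardinal α there exists a regular cardinal λ ≥ α such that 2^{<λ} < 2^λ, where 2^{<λ} = sup{2^μ : μ < λ}. Equivalently, there is no cardinal α such that 2^{<λ} = 2^λ for all regular λ ≥ α; i.e., the regular cardinals λ with 2^{<λ} < 2^λ form a proper class. -/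
open Cardinal Set

universe u

/-- For every cardinal `α` there is a regular cardinal `λ ≥ α` with
`2^{<λ} < 2^λ` (where `2^{<λ} = sup {2^μ : μ < λ}`); i.e. the regular cardinals at
which the continuum function "jumps" form a proper class. -/
theorem exists_regular_powerlt_lt_power (α : Cardinal.{u}) :
    ∃ lam : Cardinal.{u}, α ≤ lam ∧ lam.IsRegular ∧ (2 : Cardinal.{u}) ^< lam < 2 ^ lam := by
  set μ : Cardinal.{u} := max α ℵ₀ with hμ
  have hμ0 : ℵ₀ ≤ μ := le_max_right _ _
  set S : Set Cardinal.{u} := {c | (2 : Cardinal.{u}) ^ μ < 2 ^ c} with hS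
  have hSne : S.Nonempty := ⟨2 ^ μ, cantor _⟩
  set δ : Cardinal.{u} := sInf S with hδ
  have hδS : δ ∈ S := csInf_mem hSne
  have hlt : (2 : Cardinal.{u}) ^ μ < 2 ^ δ := hδS
  have hnot : ∀ x < δ, (2 : Cardinal.{u}) ^ x ≤ 2 ^ μ := by
    intro x hx
    by_contra h
    exact absurd (csInf_le (OrderBot.bddBelow S) (not_le.1 h)) (not_le.2 hx)
  have hμδ : μ < δ := by
    by_contra h
    exact absurd (power_le_power_left (two_ne_zero) (not_lt.1 h)) (not_le.2 hlt)
  have hδ0 : ℵ₀ ≤ δ := hμ0.trans hμδ.le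
  -- powerlt bound
  have hplt : (2 : Cardinal.{u}) ^< δ < 2 ^ δ := by
    refine lt_of_le_of_lt ?_ hlt
    exact powerlt_le.2 hnot
  -- regularity
  have hreg : δ.IsRegular := by
    refine ⟨hδ0, ?_⟩
    by_contra hcof
    have hcof' : δ.ord.cof < δ := not_le.1 hcof
    have hordlim : Order.IsSuccLimit δ.ord := Cardinal.isSuccLimit_ord hδ0
    obtain ⟨ι, f, hlsub, hι⟩ := Ordinal.exists_lsub_cof δ.ord
    set κ : Cardinal.{u} := δ.ord.cof with hκ
    have hκ0 : ℵ₀ ≤ κ := Ordinal.aleph0_le_cof.2 hordlim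
    -- each (f i).card + 1 < δ
    have hgi : ∀ i, (f i).card + 1 < δ := by
      intro i
      have hfi : f i < δ.ord := hlsub ▸ Ordinal.lt_lsub f i
      have hcard : (f i).card < δ := by
        rwa [← Cardinal.lt_ord]
      rcases lt_or_ge (f i).card ℵ₀ with h | h
      · exact (Cardinal.add_lt_aleph0 h Cardinal.one_lt_aleph0).trans_le hδ0
      · rwa [Cardinal.add_one_eq h]
    -- δ ≤ sum of (f i).card + 1
    have hsum : δ ≤ Cardinal.sum fun i => (f i).card + 1 := by
      have h1 : δ = δ.ord.card := (Cardinal.card_ord δ).symm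
      have h2 : δ.ord = ⨆ i, Order.succ (f i) := by
        rw [← hlsub]; rfl
      rw [h1, h2]
      refine (Ordinal.card_iSup_le_sum_card _).trans ?_
      refine Cardinal.sum_le_sum _ _ fun i => ?_
      rw [Ordinal.card_succ]
    -- conclude 2^δ ≤ 2^μ, contradiction
    have h2δ : (2 : Cardinal.{u}) ^ δ ≤ 2 ^ μ := by
      calc (2 : Cardinal.{u}) ^ δ
          ≤ 2 ^ Cardinal.sum (fun i => (f i).card + 1) :=
            power_le_power_left two_ne_zero hsum
        _ = Cardinal.prod (fun i => (2 : Cardinal.{u}) ^ ((f i).card + 1)) :=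
            Cardinal.power_sum 2 _
        _ ≤ Cardinal.prod (fun _ : ι => (2 : Cardinal.{u}) ^ μ) :=
            Cardinal.prod_le_prod _ _ fun i => (hnot _ (hgi i)).trans
              (power_le_power_left two_ne_zero le_rfl)
        _ = ((2 : Cardinal.{u}) ^ μ) ^ κ := by rw [Cardinal.prod_const', hι]
        _ = (2 : Cardinal.{u}) ^ (μ * κ) := (Cardinal.power_mul).symm
        _ ≤ 2 ^ μ := by
            have hmax : μ * κ < δ := by
              rw [Cardinal.mul_eq_max hμ0 hκ0]
              exact max_lt hμδ hcof'
            exact hnot _ hmax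
    exact absurd h2δ (not_le.2 hlt)
  exact ⟨δ, (le_max_left α ℵ₀).trans hμδ.le, hreg, hplt⟩
end

section
/- Let κ be an infinite cardinal, μ a cardinal with κ = μ⁺, and λ ≥ κ. If I is a normal, fine, κ-complete ideal on 𝒫_κ(λ), then I is not λ-saturated: there exists a family of λ many I-positive subsets of 𝒫_κ(λ) whose pairwise intersections all lie in I. -/
open Cardinal Set

universe u

/-- If `κ = μ⁺` is an infinite successor cardinal, `λ ≥ κ`, and `I` is a normal, fine,
`κ`-complete ideal on `𝒫_κ(λ)`, then `I` is not `λ`-saturated: there is a family of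
`λ` many `I`-positive subsets of `𝒫_κ(λ)` with pairwise intersections in `I`. -/
theorem not_lambda_saturated (μ κ lam : Cardinal.{u})
    (hκinf : ℵ₀ ≤ κ) (hsucc : κ = Order.succ μ) (hle : κ ≤ lam)
    (I : Set (Set (Set lam.ord.ToType)))
    (hideal : IsSetIdeal {z : Set lam.ord.ToType | #z < κ} I)
    (hnormal : IsNormalSetIdeal {z : Set lam.ord.ToType | #z < κ} I)
    (hfine : IsFineSetIdeal {z : Set lam.ord.ToType | #z < κ} I)
    (hcomplete : IsCompleteSetIdeal κ I) :
    ∃ 𝒜 : Set (Set (Set lam.ord.ToType)),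
      #𝒜 = lam ∧
      (∀ A ∈ 𝒜, A ⊆ {z : Set lam.ord.ToType | #z < κ} ∧ A ∉ I) ∧
      ∀ A ∈ 𝒜, ∀ B ∈ 𝒜, A ≠ B → A ∩ B ∈ I := by
  classical
  let X : Type u := lam.ord.ToType
  let M : Type u := μ.ord.ToType
  let Z : Set (Set X) := {z : Set X | #z < κ}
  -- basic cardinal facts
  have hμκ : μ < κ := hsucc ▸ Order.lt_succ μ
  have hμlam : μ < lam := hμκ.trans_le hle
  have hlaminf : ℵ₀ ≤ lam := hκinf.trans hle
  have hμinf : ℵ₀ ≤ μ := by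
    by_contra h
    push_neg at h
    obtain ⟨n, rfl⟩ := Cardinal.lt_aleph0.mp h
    have h2 : κ ≤ (n : Cardinal) + 1 := by
      rw [hsucc]
      exact Order.succ_le_of_lt (by norm_cast; omega)
    have h3 : ((n : Cardinal) + 1) < ℵ₀ := by
      norm_cast
      exact nat_lt_aleph0 _
    exact absurd hκinf (not_le.mpr (h2.trans_lt h3))
  have hMmk : #M = μ := Cardinal.mk_ord_toType μ
  have hXmk : #X = lam := Cardinal.mk_ord_toType lam
  have hMne : Nonempty M := by
    apply Cardinal.mk_ne_zero_iff.mp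
    rw [hMmk]
    exact (aleph0_pos.trans_le hμinf).ne'
  -- choose injections g z : z ↪ M for z ∈ Z
  have hg0 : ∀ z : Set X, ∃ f : z → M, #z < κ → Function.Injective f := by
    intro z
    by_cases h : #z < κ
    · have h1 : #z ≤ μ := by
        rw [hsucc] at h
        exact Order.lt_succ_iff.mp h
      have h2 : #z ≤ #M := by rw [hMmk]; exact h1
      obtain ⟨f⟩ := (Cardinal.le_def _ _).mp h2
      exact ⟨f, fun _ => f.injective⟩
    · exact ⟨fun _ => Classical.arbitrary M, fun hz => absurd hz h⟩
  choose g hginj using hg0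
  -- the matrix
  let A : X → M → Set (Set X) := fun α ξ => {z | z ∈ Z ∧ ∃ h : α ∈ z, g z ⟨α, h⟩ = ξ}
  have hA_iff : ∀ {α : X} {ξ : M} {z : Set X},
      z ∈ A α ξ ↔ z ∈ Z ∧ ∃ h : α ∈ z, g z ⟨α, h⟩ = ξ := Iff.rfl
  have hAsub : ∀ α ξ, A α ξ ⊆ Z := fun α ξ z hz => hz.1
  have hAξ : ∀ {α : X} {ξ ξ' : M} {z : Set X}, z ∈ A α ξ → z ∈ A α ξ' → ξ = ξ' := by
    intro α ξ ξ' z h h'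
    obtain ⟨hz, h1, h2⟩ := hA_iff.mp h
    obtain ⟨hz', h1', h2'⟩ := hA_iff.mp h'
    rw [← h2, ← h2']
  have hAα : ∀ {α β : X} {ξ : M} {z : Set X}, z ∈ A α ξ → z ∈ A β ξ → α = β := by
    intro α β ξ z h h'
    obtain ⟨hz, h1, h2⟩ := hA_iff.mp h
    obtain ⟨hz', h1', h2'⟩ := hA_iff.mp h'
    have := hginj z hz (h2.trans h2'.symm)
    exact congrArg Subtype.val this
  -- the empty set is in I
  have hZempty : (∅ : Set X) ∈ Z := by
    show #(∅ : Set X) < κ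
    rw [mk_emptyCollection]
    exact aleph0_pos.trans_le hκinf
  have hIempty : (∅ : Set (Set X)) ∈ I :=
    hideal.2.1 _ (hideal.2.2.2.1 _ hZempty) _ (empty_subset _)
  have hdown : ∀ {B C : Set (Set X)}, C ∈ I → B ⊆ C → B ∈ I :=
    fun hC hBC => hideal.2.1 _ hC _ hBC
  -- completeness for M-indexed unions
  have hcompl : ∀ f : M → Set (Set X), (∀ ξ, f ξ ∈ I) → (⋃ ξ, f ξ) ∈ I := by
    intro f hf
    have h1 : #(Set.range f) < κ :=
      lt_of_le_of_lt mk_range_le (by rw [hMmk]; exact hμκ)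
    have h2 := hcomplete (Set.range f) h1 (by rintro B ⟨ξ, rfl⟩; exact hf ξ)
    rwa [sUnion_range] at h2
  -- the trace sets
  let T : M → Set (Set X) → Set X := fun ξ S => {α | A α ξ ∩ S ∉ I}
  have hT_iff : ∀ {ξ : M} {S : Set (Set X)} {α : X},
      α ∈ T ξ S ↔ A α ξ ∩ S ∉ I := Iff.rfl
  -- core lemma: rows restricted to any positive set are jointly large
  have hcore : ∀ S : Set (Set X), S ⊆ Z → S ∉ I → ∀ ν < lam, ∃ ξ : M, ν < #(T ξ S) := by
    intro S hSZ hSpos ν hν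
    by_contra hcon
    push_neg at hcon
    have hU : #(⋃ ξ, T ξ S) < lam := by
      calc #(⋃ ξ, T ξ S) ≤ #M * ⨆ ξ, #(T ξ S) := mk_iUnion_le _
        _ ≤ μ * ν := by
            rw [hMmk]
            exact mul_le_mul_right (ciSup_le' hcon) μ
        _ < lam := mul_lt_of_lt hlaminf hμlam hν
    have hUne : (⋃ ξ, T ξ S) ≠ Set.univ := by
      intro h
      rw [h, mk_univ, hXmk] at hU
      exact lt_irrefl _ hU
    obtain ⟨γ, hγ⟩ := (Set.ne_univ_iff_exists_notMem _).mp hUne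
    have hγξ : ∀ ξ, A γ ξ ∩ S ∈ I := by
      intro ξ
      by_contra h
      exact hγ (mem_iUnion.mpr ⟨ξ, hT_iff.mpr h⟩)
    have hbig : ({z | z ∈ Z ∧ γ ∉ z} ∪ ⋃ ξ, A γ ξ ∩ S) ∈ I :=
      hideal.2.2.1 _ (hfine γ) _ (hcompl _ hγξ)
    apply hSpos
    apply hdown hbig
    intro z hz
    by_cases hγz : γ ∈ z
    · exact Or.inr (mem_iUnion.mpr ⟨g z ⟨γ, hγz⟩, ⟨hA_iff.mpr ⟨hSZ hz, hγz, rfl⟩, hz⟩⟩)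
    · exact Or.inl ⟨hSZ hz, hγz⟩
  have hZpos : Z ∉ I := hideal.2.2.2.2
  by_cases hcase : ∃ ξ₀ : M, lam ≤ #(T ξ₀ Z)
  · -- one row suffices
    obtain ⟨ξ₀, hξ₀⟩ := hcase
    let P : ↥(T ξ₀ Z) → Set (Set X) := fun α => A α.1 ξ₀
    have hPpos : ∀ α, P α ∉ I := fun α hmem => α.2 (hdown hmem inter_subset_left)
    have hPdisj : ∀ a b : ↥(T ξ₀ Z), a ≠ b → P a ∩ P b = ∅ := by
      intro a b hne
      ext z
      simp only [mem_inter_iff, mem_empty_iff_false, iff_false]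
      rintro ⟨h1, h2⟩
      exact hne (Subtype.ext (hAα h1 h2))
    have hPinj : Function.Injective P := by
      intro a b hab
      by_contra hne
      have h := hPdisj a b hne
      rw [hab, inter_self] at h
      exact hPpos b (h ▸ hIempty)
    refine ⟨Set.range P, ?_, ?_, ?_⟩
    · rw [mk_range_eq P hPinj]
      refine le_antisymm ?_ hξ₀
      calc #(T ξ₀ Z) ≤ #X := mk_set_le _
        _ = lam := hXmk
    · rintro B ⟨a, rfl⟩
      exact ⟨hAsub _ _, hPpos a⟩
    · rintro B ⟨a, rfl⟩ C ⟨b, rfl⟩ hne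
      have hab : a ≠ b := fun h => hne (congrArg P h)
      rw [hPdisj a b hab]
      exact hIempty
  · -- two-level construction
    push_neg at hcase
    obtain ⟨ξ₀, hξ₀⟩ := hcore Z subset_rfl hZpos μ hμlam
    have hMe : #M ≤ #(T ξ₀ Z) := by rw [hMmk]; exact hξ₀.le
    obtain ⟨e⟩ := (Cardinal.le_def _ _).mp hMe
    let S : M → Set (Set X) := fun ξ => A (e ξ).1 ξ₀
    have hSpos : ∀ ξ, S ξ ∉ I := fun ξ h => (e ξ).2 (hdown h inter_subset_left)
    have hSZ : ∀ ξ, S ξ ⊆ Z := fun ξ => hAsub _ _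
    have hSdisj : ∀ {ξ ξ' : M} {z : Set X}, z ∈ S ξ → z ∈ S ξ' → ξ = ξ' :=
      fun h h' => e.injective (Subtype.ext (hAα h h'))
    have hrow : ∀ ξ : M, ∃ η : M, #(T ξ Z) < #(T η (S ξ)) :=
      fun ξ => hcore (S ξ) (hSZ ξ) (hSpos ξ) _ (hcase ξ)
    choose η hη using hrow
    have hw0 : ∀ ξ : M, ∃ w : ↥(T ξ Z) → ↥(T (η ξ) (S ξ)), Function.Injective w := by
      intro ξ
      obtain ⟨w⟩ := (Cardinal.le_def _ _).mp (hη ξ).le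
      exact ⟨w, w.injective⟩
    choose w hwinj using hw0
    let P : (Σ ξ : M, ↥(T ξ Z)) → Set (Set X) := fun p => A (w p.1 p.2).1 (η p.1) ∩ S p.1
    have hPpos : ∀ p, P p ∉ I := fun p => (w p.1 p.2).2
    have hPsub : ∀ p, P p ⊆ Z := fun p => inter_subset_right.trans (hSZ p.1)
    have hPdisj : ∀ p q, p ≠ q → P p ∩ P q = ∅ := by
      rintro ⟨ξ, a⟩ ⟨ξ', b⟩ hne
      ext z
      simp only [mem_inter_iff, mem_empty_iff_false, iff_false]
      rintro ⟨⟨h1, h2⟩, h3, h4⟩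
      have hξ : ξ = ξ' := hSdisj h2 h4
      subst hξ
      have hab : a = b := hwinj ξ (Subtype.ext (hAα h1 h3))
      exact hne (by rw [hab])
    have hPinj : Function.Injective P := by
      intro p q h
      by_contra hne
      have h2 := hPdisj p q hne
      rw [h, inter_self] at h2
      exact hPpos q (h2 ▸ hIempty)
    -- every α lies in some trace set over Z
    have hαT : ∀ α : X, ∃ ξ : M, α ∈ T ξ Z := by
      intro α
      by_contra h
      push_neg at h
      have hIξ : ∀ ξ, A α ξ ∩ Z ∈ I := fun ξ => not_not.mp (h ξ)
      have hbig : ({z | z ∈ Z ∧ α ∉ z} ∪ ⋃ ξ, A α ξ ∩ Z) ∈ I :=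
        hideal.2.2.1 _ (hfine α) _ (hcompl _ hIξ)
      apply hZpos
      apply hdown hbig
      intro z hz
      by_cases hαz : α ∈ z
      · exact Or.inr (mem_iUnion.mpr ⟨g z ⟨α, hαz⟩, ⟨hA_iff.mpr ⟨hz, hαz, rfl⟩, hz⟩⟩)
      · exact Or.inl ⟨hz, hαz⟩
    have huniv : (⋃ ξ, T ξ Z) = Set.univ := by
      rw [Set.eq_univ_iff_forall]
      intro α
      obtain ⟨ξ, hξ⟩ := hαT α
      exact mem_iUnion.mpr ⟨ξ, hξ⟩
    refine ⟨Set.range P, ?_, ?_, ?_⟩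
    · rw [mk_range_eq P hPinj, mk_sigma]
      refine le_antisymm ?_ ?_
      · calc (Cardinal.sum fun ξ => #(T ξ Z)) ≤ Cardinal.sum fun _ : M => lam :=
            Cardinal.sum_le_sum _ _ fun ξ => (hcase ξ).le
          _ = #M * lam := Cardinal.sum_const' M lam
          _ = lam := by
              rw [hMmk, Cardinal.mul_eq_max hμinf hlaminf]
              exact max_eq_right hμlam.le
      · calc lam = #(⋃ ξ, T ξ Z) := by rw [huniv, mk_univ, hXmk]
          _ ≤ Cardinal.sum fun ξ => #(T ξ Z) := mk_iUnion_le_sum_mk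
    · rintro B ⟨p, rfl⟩
      exact ⟨hPsub p, hPpos p⟩
    · rintro B ⟨p, rfl⟩ C ⟨q, rfl⟩ hne
      have hpq : p ≠ q := fun h => hne (congrArg P h)
      rw [hPdisj p q hpq]
      exact hIempty
end
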